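/- The vector ζ1 + ζ3 + ζ4 + ζ6 lies in the W-orbit of ρ_c; that is, the infinitesimal character [1,0,1,1,0,1,0] is conjugate to ρ_c under the Weyl group of E7. -/

import Mathlib

open scoped BigOperators

namespace E7

noncomputable section

/-- The standard inner product on ℝ⁸. -/
def ip (x y : Fin 8 → ℝ) : ℝ := ∑ i, x i * y i

/-- The simple roots α₁,…,α₇ of E₇ (indexed by `Fin 7`). -/
def sroot : Fin 7 → Fin 8 → ℝ :=
  ![![1/2, -1/2, -1/2, -1/2, -1/2, -1/2, -1/2, 1/2],
    ![1, 1, 0, 0, 0, 0, 0, 0],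
    ![-1, 1, 0, 0, 0, 0, 0, 0],
    ![0, -1, 1, 0, 0, 0, 0, 0],
    ![0, 0, -1, 1, 0, 0, 0, 0],
    ![0, 0, 0, -1, 1, 0, 0, 0],
    ![0, 0, 0, 0, -1, 1, 0, 0]]

/-- The root lattice `Q`: integer linear combinations of the simple roots. -/
def latQ : Set (Fin 8 → ℝ) := {v | ∃ c : Fin 7 → ℤ, v = ∑ j, (c j : ℝ) • sroot j}

/-- The E₇ root system `Φ = {v ∈ Q : ⟨v,v⟩ = 2}`. -/
def Phi : Set (Fin 8 → ℝ) := {v | v ∈ latQ ∧ ip v v = 2}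

/-- The vector ζ. -/
def zeta : Fin 8 → ℝ := ![0, 0, 0, 0, 0, 1, -1/2, 1/2]

/-- The positive roots Δ⁺: roots that are nonnegative integer combinations
of the simple roots. -/
def PhiPos : Set (Fin 8 → ℝ) :=
  {v | v ∈ Phi ∧ ∃ c : Fin 7 → ℕ, v = ∑ j, (c j : ℝ) • sroot j}

/-- The compact positive roots Δ⁺(k) = {α ∈ Δ⁺ : ⟨α,ζ⟩ = 0}. -/
def PhiPosK : Set (Fin 8 → ℝ) := {v | v ∈ PhiPos ∧ ip v zeta = 0}

/-- The Weyl group `W` of E₇: the subgroup of linear automorphisms of ℝ⁸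
generated by the reflections `s_α : v ↦ v − ⟨v,α⟩α` for `α ∈ Φ`. -/
def W : Subgroup ((Fin 8 → ℝ) ≃ₗ[ℝ] (Fin 8 → ℝ)) :=
  Subgroup.closure {g | ∃ a ∈ Phi, ∀ v, g v = v - ip v a • a}

/-- The subgroup of `W` generated by the six compact simple reflections
`s_{γ₁},…,s_{γ₆}` (the Weyl group of E₆, i.e. of k). -/
def WK : Subgroup ((Fin 8 → ℝ) ≃ₗ[ℝ] (Fin 8 → ℝ)) :=
  Subgroup.closure
    {g | ∃ i : Fin 6, ∀ v, g v = v - ip v (sroot i.castSucc) • sroot i.castSucc}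

end

set_option maxHeartbeats 1000000
set_option maxRecDepth 100000

noncomputable section Aux

lemma gv7_0 {α : Type*} (a0 a1 a2 a3 a4 a5 a6 : α) : (![a0, a1, a2, a3, a4, a5, a6]) (0 : Fin 7) = a0 := rfl
lemma gv7_1 {α : Type*} (a0 a1 a2 a3 a4 a5 a6 : α) : (![a0, a1, a2, a3, a4, a5, a6]) (1 : Fin 7) = a1 := rfl
lemma gv7_2 {α : Type*} (a0 a1 a2 a3 a4 a5 a6 : α) : (![a0, a1, a2, a3, a4, a5, a6]) (2 : Fin 7) = a2 := rfl
lemma gv7_3 {α : Type*} (a0 a1 a2 a3 a4 a5 a6 : α) : (![a0, a1, a2, a3, a4, a5, a6]) (3 : Fin 7) = a3 := rfl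
lemma gv7_4 {α : Type*} (a0 a1 a2 a3 a4 a5 a6 : α) : (![a0, a1, a2, a3, a4, a5, a6]) (4 : Fin 7) = a4 := rfl
lemma gv7_5 {α : Type*} (a0 a1 a2 a3 a4 a5 a6 : α) : (![a0, a1, a2, a3, a4, a5, a6]) (5 : Fin 7) = a5 := rfl
lemma gv7_6 {α : Type*} (a0 a1 a2 a3 a4 a5 a6 : α) : (![a0, a1, a2, a3, a4, a5, a6]) (6 : Fin 7) = a6 := rfl
lemma gv8_0 {α : Type*} (a0 a1 a2 a3 a4 a5 a6 a7 : α) : (![a0, a1, a2, a3, a4, a5, a6, a7]) (0 : Fin 8) = a0 := rfl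
lemma gv8_1 {α : Type*} (a0 a1 a2 a3 a4 a5 a6 a7 : α) : (![a0, a1, a2, a3, a4, a5, a6, a7]) (1 : Fin 8) = a1 := rfl
lemma gv8_2 {α : Type*} (a0 a1 a2 a3 a4 a5 a6 a7 : α) : (![a0, a1, a2, a3, a4, a5, a6, a7]) (2 : Fin 8) = a2 := rfl
lemma gv8_3 {α : Type*} (a0 a1 a2 a3 a4 a5 a6 a7 : α) : (![a0, a1, a2, a3, a4, a5, a6, a7]) (3 : Fin 8) = a3 := rfl
lemma gv8_4 {α : Type*} (a0 a1 a2 a3 a4 a5 a6 a7 : α) : (![a0, a1, a2, a3, a4, a5, a6, a7]) (4 : Fin 8) = a4 := rfl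
lemma gv8_5 {α : Type*} (a0 a1 a2 a3 a4 a5 a6 a7 : α) : (![a0, a1, a2, a3, a4, a5, a6, a7]) (5 : Fin 8) = a5 := rfl
lemma gv8_6 {α : Type*} (a0 a1 a2 a3 a4 a5 a6 a7 : α) : (![a0, a1, a2, a3, a4, a5, a6, a7]) (6 : Fin 8) = a6 := rfl
lemma gv8_7 {α : Type*} (a0 a1 a2 a3 a4 a5 a6 a7 : α) : (![a0, a1, a2, a3, a4, a5, a6, a7]) (7 : Fin 8) = a7 := rfl

@[simp] lemma sroot_e0_0 : sroot 0 0 = 1/2 := rfl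
@[simp] lemma sroot_e0_1 : sroot 0 1 = -1/2 := rfl
@[simp] lemma sroot_e0_2 : sroot 0 2 = -1/2 := rfl
@[simp] lemma sroot_e0_3 : sroot 0 3 = -1/2 := rfl
@[simp] lemma sroot_e0_4 : sroot 0 4 = -1/2 := rfl
@[simp] lemma sroot_e0_5 : sroot 0 5 = -1/2 := rfl
@[simp] lemma sroot_e0_6 : sroot 0 6 = -1/2 := rfl
@[simp] lemma sroot_e0_7 : sroot 0 7 = 1/2 := rfl
@[simp] lemma sroot_e1_0 : sroot 1 0 = 1 := rfl
@[simp] lemma sroot_e1_1 : sroot 1 1 = 1 := rfl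
@[simp] lemma sroot_e1_2 : sroot 1 2 = 0 := rfl
@[simp] lemma sroot_e1_3 : sroot 1 3 = 0 := rfl
@[simp] lemma sroot_e1_4 : sroot 1 4 = 0 := rfl
@[simp] lemma sroot_e1_5 : sroot 1 5 = 0 := rfl
@[simp] lemma sroot_e1_6 : sroot 1 6 = 0 := rfl
@[simp] lemma sroot_e1_7 : sroot 1 7 = 0 := rfl
@[simp] lemma sroot_e2_0 : sroot 2 0 = -1 := rfl
@[simp] lemma sroot_e2_1 : sroot 2 1 = 1 := rfl
@[simp] lemma sroot_e2_2 : sroot 2 2 = 0 := rfl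
@[simp] lemma sroot_e2_3 : sroot 2 3 = 0 := rfl
@[simp] lemma sroot_e2_4 : sroot 2 4 = 0 := rfl
@[simp] lemma sroot_e2_5 : sroot 2 5 = 0 := rfl
@[simp] lemma sroot_e2_6 : sroot 2 6 = 0 := rfl
@[simp] lemma sroot_e2_7 : sroot 2 7 = 0 := rfl
@[simp] lemma sroot_e3_0 : sroot 3 0 = 0 := rfl
@[simp] lemma sroot_e3_1 : sroot 3 1 = -1 := rfl
@[simp] lemma sroot_e3_2 : sroot 3 2 = 1 := rfl
@[simp] lemma sroot_e3_3 : sroot 3 3 = 0 := rfl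
@[simp] lemma sroot_e3_4 : sroot 3 4 = 0 := rfl
@[simp] lemma sroot_e3_5 : sroot 3 5 = 0 := rfl
@[simp] lemma sroot_e3_6 : sroot 3 6 = 0 := rfl
@[simp] lemma sroot_e3_7 : sroot 3 7 = 0 := rfl
@[simp] lemma sroot_e4_0 : sroot 4 0 = 0 := rfl
@[simp] lemma sroot_e4_1 : sroot 4 1 = 0 := rfl
@[simp] lemma sroot_e4_2 : sroot 4 2 = -1 := rfl
@[simp] lemma sroot_e4_3 : sroot 4 3 = 1 := rfl
@[simp] lemma sroot_e4_4 : sroot 4 4 = 0 := rfl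
@[simp] lemma sroot_e4_5 : sroot 4 5 = 0 := rfl
@[simp] lemma sroot_e4_6 : sroot 4 6 = 0 := rfl
@[simp] lemma sroot_e4_7 : sroot 4 7 = 0 := rfl
@[simp] lemma sroot_e5_0 : sroot 5 0 = 0 := rfl
@[simp] lemma sroot_e5_1 : sroot 5 1 = 0 := rfl
@[simp] lemma sroot_e5_2 : sroot 5 2 = 0 := rfl
@[simp] lemma sroot_e5_3 : sroot 5 3 = -1 := rfl
@[simp] lemma sroot_e5_4 : sroot 5 4 = 1 := rfl
@[simp] lemma sroot_e5_5 : sroot 5 5 = 0 := rfl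
@[simp] lemma sroot_e5_6 : sroot 5 6 = 0 := rfl
@[simp] lemma sroot_e5_7 : sroot 5 7 = 0 := rfl
@[simp] lemma sroot_e6_0 : sroot 6 0 = 0 := rfl
@[simp] lemma sroot_e6_1 : sroot 6 1 = 0 := rfl
@[simp] lemma sroot_e6_2 : sroot 6 2 = 0 := rfl
@[simp] lemma sroot_e6_3 : sroot 6 3 = 0 := rfl
@[simp] lemma sroot_e6_4 : sroot 6 4 = -1 := rfl
@[simp] lemma sroot_e6_5 : sroot 6 5 = 1 := rfl
@[simp] lemma sroot_e6_6 : sroot 6 6 = 0 := rfl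
@[simp] lemma sroot_e6_7 : sroot 6 7 = 0 := rfl
@[simp] lemma zeta_e0 : zeta 0 = 0 := rfl
@[simp] lemma zeta_e1 : zeta 1 = 0 := rfl
@[simp] lemma zeta_e2 : zeta 2 = 0 := rfl
@[simp] lemma zeta_e3 : zeta 3 = 0 := rfl
@[simp] lemma zeta_e4 : zeta 4 = 0 := rfl
@[simp] lemma zeta_e5 : zeta 5 = 1 := rfl
@[simp] lemma zeta_e6 : zeta 6 = -1/2 := rfl
@[simp] lemma zeta_e7 : zeta 7 = 1/2 := rfl

/-- The fundamental weights. -/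
def zfw : Fin 7 → Fin 8 → ℝ :=
  ![![0, 0, 0, 0, 0, 0, -1, 1],
    ![1/2, 1/2, 1/2, 1/2, 1/2, 1/2, -1, 1],
    ![-1/2, 1/2, 1/2, 1/2, 1/2, 1/2, -3/2, 3/2],
    ![0, 0, 1, 1, 1, 1, -2, 2],
    ![0, 0, 0, 1, 1, 1, -3/2, 3/2],
    ![0, 0, 0, 0, 1, 1, -1, 1],
    ![0, 0, 0, 0, 0, 1, -1/2, 1/2]]
@[simp] lemma zfw_e0_0 : zfw 0 0 = 0 := rfl
@[simp] lemma zfw_e0_1 : zfw 0 1 = 0 := rfl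
@[simp] lemma zfw_e0_2 : zfw 0 2 = 0 := rfl
@[simp] lemma zfw_e0_3 : zfw 0 3 = 0 := rfl
@[simp] lemma zfw_e0_4 : zfw 0 4 = 0 := rfl
@[simp] lemma zfw_e0_5 : zfw 0 5 = 0 := rfl
@[simp] lemma zfw_e0_6 : zfw 0 6 = -1 := rfl
@[simp] lemma zfw_e0_7 : zfw 0 7 = 1 := rfl
@[simp] lemma zfw_e1_0 : zfw 1 0 = 1/2 := rfl
@[simp] lemma zfw_e1_1 : zfw 1 1 = 1/2 := rfl
@[simp] lemma zfw_e1_2 : zfw 1 2 = 1/2 := rfl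
@[simp] lemma zfw_e1_3 : zfw 1 3 = 1/2 := rfl
@[simp] lemma zfw_e1_4 : zfw 1 4 = 1/2 := rfl
@[simp] lemma zfw_e1_5 : zfw 1 5 = 1/2 := rfl
@[simp] lemma zfw_e1_6 : zfw 1 6 = -1 := rfl
@[simp] lemma zfw_e1_7 : zfw 1 7 = 1 := rfl
@[simp] lemma zfw_e2_0 : zfw 2 0 = -1/2 := rfl
@[simp] lemma zfw_e2_1 : zfw 2 1 = 1/2 := rfl
@[simp] lemma zfw_e2_2 : zfw 2 2 = 1/2 := rfl
@[simp] lemma zfw_e2_3 : zfw 2 3 = 1/2 := rfl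
@[simp] lemma zfw_e2_4 : zfw 2 4 = 1/2 := rfl
@[simp] lemma zfw_e2_5 : zfw 2 5 = 1/2 := rfl
@[simp] lemma zfw_e2_6 : zfw 2 6 = -3/2 := rfl
@[simp] lemma zfw_e2_7 : zfw 2 7 = 3/2 := rfl
@[simp] lemma zfw_e3_0 : zfw 3 0 = 0 := rfl
@[simp] lemma zfw_e3_1 : zfw 3 1 = 0 := rfl
@[simp] lemma zfw_e3_2 : zfw 3 2 = 1 := rfl
@[simp] lemma zfw_e3_3 : zfw 3 3 = 1 := rfl
@[simp] lemma zfw_e3_4 : zfw 3 4 = 1 := rfl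
@[simp] lemma zfw_e3_5 : zfw 3 5 = 1 := rfl
@[simp] lemma zfw_e3_6 : zfw 3 6 = -2 := rfl
@[simp] lemma zfw_e3_7 : zfw 3 7 = 2 := rfl
@[simp] lemma zfw_e4_0 : zfw 4 0 = 0 := rfl
@[simp] lemma zfw_e4_1 : zfw 4 1 = 0 := rfl
@[simp] lemma zfw_e4_2 : zfw 4 2 = 0 := rfl
@[simp] lemma zfw_e4_3 : zfw 4 3 = 1 := rfl
@[simp] lemma zfw_e4_4 : zfw 4 4 = 1 := rfl
@[simp] lemma zfw_e4_5 : zfw 4 5 = 1 := rfl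
@[simp] lemma zfw_e4_6 : zfw 4 6 = -3/2 := rfl
@[simp] lemma zfw_e4_7 : zfw 4 7 = 3/2 := rfl
@[simp] lemma zfw_e5_0 : zfw 5 0 = 0 := rfl
@[simp] lemma zfw_e5_1 : zfw 5 1 = 0 := rfl
@[simp] lemma zfw_e5_2 : zfw 5 2 = 0 := rfl
@[simp] lemma zfw_e5_3 : zfw 5 3 = 0 := rfl
@[simp] lemma zfw_e5_4 : zfw 5 4 = 1 := rfl
@[simp] lemma zfw_e5_5 : zfw 5 5 = 1 := rfl
@[simp] lemma zfw_e5_6 : zfw 5 6 = -1 := rfl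
@[simp] lemma zfw_e5_7 : zfw 5 7 = 1 := rfl
@[simp] lemma zfw_e6_0 : zfw 6 0 = 0 := rfl
@[simp] lemma zfw_e6_1 : zfw 6 1 = 0 := rfl
@[simp] lemma zfw_e6_2 : zfw 6 2 = 0 := rfl
@[simp] lemma zfw_e6_3 : zfw 6 3 = 0 := rfl
@[simp] lemma zfw_e6_4 : zfw 6 4 = 0 := rfl
@[simp] lemma zfw_e6_5 : zfw 6 5 = 1 := rfl
@[simp] lemma zfw_e6_6 : zfw 6 6 = -1/2 := rfl
@[simp] lemma zfw_e6_7 : zfw 6 7 = 1/2 := rfl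

def wv0 : Fin 8 → ℝ := ![0, 1, 2, 3, 4, -4, -4, 4]
@[simp] lemma wv0_e0 : wv0 0 = 0 := rfl
@[simp] lemma wv0_e1 : wv0 1 = 1 := rfl
@[simp] lemma wv0_e2 : wv0 2 = 2 := rfl
@[simp] lemma wv0_e3 : wv0 3 = 3 := rfl
@[simp] lemma wv0_e4 : wv0 4 = 4 := rfl
@[simp] lemma wv0_e5 : wv0 5 = -4 := rfl
@[simp] lemma wv0_e6 : wv0 6 = -4 := rfl
@[simp] lemma wv0_e7 : wv0 7 = 4 := rfl

def wv1 : Fin 8 → ℝ := ![0, 1, 2, 3, -4, 4, -4, 4]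
@[simp] lemma wv1_e0 : wv1 0 = 0 := rfl
@[simp] lemma wv1_e1 : wv1 1 = 1 := rfl
@[simp] lemma wv1_e2 : wv1 2 = 2 := rfl
@[simp] lemma wv1_e3 : wv1 3 = 3 := rfl
@[simp] lemma wv1_e4 : wv1 4 = -4 := rfl
@[simp] lemma wv1_e5 : wv1 5 = 4 := rfl
@[simp] lemma wv1_e6 : wv1 6 = -4 := rfl
@[simp] lemma wv1_e7 : wv1 7 = 4 := rfl

def wv2 : Fin 8 → ℝ := ![0, 1, 2, -4, 3, 4, -4, 4]
@[simp] lemma wv2_e0 : wv2 0 = 0 := rfl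
@[simp] lemma wv2_e1 : wv2 1 = 1 := rfl
@[simp] lemma wv2_e2 : wv2 2 = 2 := rfl
@[simp] lemma wv2_e3 : wv2 3 = -4 := rfl
@[simp] lemma wv2_e4 : wv2 4 = 3 := rfl
@[simp] lemma wv2_e5 : wv2 5 = 4 := rfl
@[simp] lemma wv2_e6 : wv2 6 = -4 := rfl
@[simp] lemma wv2_e7 : wv2 7 = 4 := rfl

def wv3 : Fin 8 → ℝ := ![0, 1, -4, 2, 3, 4, -4, 4]
@[simp] lemma wv3_e0 : wv3 0 = 0 := rfl
@[simp] lemma wv3_e1 : wv3 1 = 1 := rfl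
@[simp] lemma wv3_e2 : wv3 2 = -4 := rfl
@[simp] lemma wv3_e3 : wv3 3 = 2 := rfl
@[simp] lemma wv3_e4 : wv3 4 = 3 := rfl
@[simp] lemma wv3_e5 : wv3 5 = 4 := rfl
@[simp] lemma wv3_e6 : wv3 6 = -4 := rfl
@[simp] lemma wv3_e7 : wv3 7 = 4 := rfl

def wv4 : Fin 8 → ℝ := ![0, -4, 1, 2, 3, 4, -4, 4]
@[simp] lemma wv4_e0 : wv4 0 = 0 := rfl
@[simp] lemma wv4_e1 : wv4 1 = -4 := rfl
@[simp] lemma wv4_e2 : wv4 2 = 1 := rfl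
@[simp] lemma wv4_e3 : wv4 3 = 2 := rfl
@[simp] lemma wv4_e4 : wv4 4 = 3 := rfl
@[simp] lemma wv4_e5 : wv4 5 = 4 := rfl
@[simp] lemma wv4_e6 : wv4 6 = -4 := rfl
@[simp] lemma wv4_e7 : wv4 7 = 4 := rfl

def wv5 : Fin 8 → ℝ := ![4, 0, 1, 2, 3, 4, -4, 4]
@[simp] lemma wv5_e0 : wv5 0 = 4 := rfl
@[simp] lemma wv5_e1 : wv5 1 = 0 := rfl
@[simp] lemma wv5_e2 : wv5 2 = 1 := rfl
@[simp] lemma wv5_e3 : wv5 3 = 2 := rfl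
@[simp] lemma wv5_e4 : wv5 4 = 3 := rfl
@[simp] lemma wv5_e5 : wv5 5 = 4 := rfl
@[simp] lemma wv5_e6 : wv5 6 = -4 := rfl
@[simp] lemma wv5_e7 : wv5 7 = 4 := rfl

def wv6 : Fin 8 → ℝ := ![0, 4, 1, 2, 3, 4, -4, 4]
@[simp] lemma wv6_e0 : wv6 0 = 0 := rfl
@[simp] lemma wv6_e1 : wv6 1 = 4 := rfl
@[simp] lemma wv6_e2 : wv6 2 = 1 := rfl
@[simp] lemma wv6_e3 : wv6 3 = 2 := rfl
@[simp] lemma wv6_e4 : wv6 4 = 3 := rfl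
@[simp] lemma wv6_e5 : wv6 5 = 4 := rfl
@[simp] lemma wv6_e6 : wv6 6 = -4 := rfl
@[simp] lemma wv6_e7 : wv6 7 = 4 := rfl

def wv7 : Fin 8 → ℝ := ![3/2, 5/2, -1/2, 1/2, 3/2, 5/2, -11/2, 11/2]
@[simp] lemma wv7_e0 : wv7 0 = 3/2 := rfl
@[simp] lemma wv7_e1 : wv7 1 = 5/2 := rfl
@[simp] lemma wv7_e2 : wv7 2 = -1/2 := rfl
@[simp] lemma wv7_e3 : wv7 3 = 1/2 := rfl
@[simp] lemma wv7_e4 : wv7 4 = 3/2 := rfl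
@[simp] lemma wv7_e5 : wv7 5 = 5/2 := rfl
@[simp] lemma wv7_e6 : wv7 6 = -11/2 := rfl
@[simp] lemma wv7_e7 : wv7 7 = 11/2 := rfl

def wv8 : Fin 8 → ℝ := ![3/2, -1/2, 5/2, 1/2, 3/2, 5/2, -11/2, 11/2]
@[simp] lemma wv8_e0 : wv8 0 = 3/2 := rfl
@[simp] lemma wv8_e1 : wv8 1 = -1/2 := rfl
@[simp] lemma wv8_e2 : wv8 2 = 5/2 := rfl
@[simp] lemma wv8_e3 : wv8 3 = 1/2 := rfl
@[simp] lemma wv8_e4 : wv8 4 = 3/2 := rfl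
@[simp] lemma wv8_e5 : wv8 5 = 5/2 := rfl
@[simp] lemma wv8_e6 : wv8 6 = -11/2 := rfl
@[simp] lemma wv8_e7 : wv8 7 = 11/2 := rfl

def wv9 : Fin 8 → ℝ := ![-1/2, 3/2, 5/2, 1/2, 3/2, 5/2, -11/2, 11/2]
@[simp] lemma wv9_e0 : wv9 0 = -1/2 := rfl
@[simp] lemma wv9_e1 : wv9 1 = 3/2 := rfl
@[simp] lemma wv9_e2 : wv9 2 = 5/2 := rfl
@[simp] lemma wv9_e3 : wv9 3 = 1/2 := rfl
@[simp] lemma wv9_e4 : wv9 4 = 3/2 := rfl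
@[simp] lemma wv9_e5 : wv9 5 = 5/2 := rfl
@[simp] lemma wv9_e6 : wv9 6 = -11/2 := rfl
@[simp] lemma wv9_e7 : wv9 7 = 11/2 := rfl

def wv10 : Fin 8 → ℝ := ![-1/2, 3/2, 1/2, 5/2, 3/2, 5/2, -11/2, 11/2]
@[simp] lemma wv10_e0 : wv10 0 = -1/2 := rfl
@[simp] lemma wv10_e1 : wv10 1 = 3/2 := rfl
@[simp] lemma wv10_e2 : wv10 2 = 1/2 := rfl
@[simp] lemma wv10_e3 : wv10 3 = 5/2 := rfl
@[simp] lemma wv10_e4 : wv10 4 = 3/2 := rfl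
@[simp] lemma wv10_e5 : wv10 5 = 5/2 := rfl
@[simp] lemma wv10_e6 : wv10 6 = -11/2 := rfl
@[simp] lemma wv10_e7 : wv10 7 = 11/2 := rfl

def wv11 : Fin 8 → ℝ := ![-1/2, 1/2, 3/2, 5/2, 3/2, 5/2, -11/2, 11/2]
@[simp] lemma wv11_e0 : wv11 0 = -1/2 := rfl
@[simp] lemma wv11_e1 : wv11 1 = 1/2 := rfl
@[simp] lemma wv11_e2 : wv11 2 = 3/2 := rfl
@[simp] lemma wv11_e3 : wv11 3 = 5/2 := rfl
@[simp] lemma wv11_e4 : wv11 4 = 3/2 := rfl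
@[simp] lemma wv11_e5 : wv11 5 = 5/2 := rfl
@[simp] lemma wv11_e6 : wv11 6 = -11/2 := rfl
@[simp] lemma wv11_e7 : wv11 7 = 11/2 := rfl

def wv12 : Fin 8 → ℝ := ![-1/2, 1/2, 3/2, 3/2, 5/2, 5/2, -11/2, 11/2]
@[simp] lemma wv12_e0 : wv12 0 = -1/2 := rfl
@[simp] lemma wv12_e1 : wv12 1 = 1/2 := rfl
@[simp] lemma wv12_e2 : wv12 2 = 3/2 := rfl
@[simp] lemma wv12_e3 : wv12 3 = 3/2 := rfl
@[simp] lemma wv12_e4 : wv12 4 = 5/2 := rfl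
@[simp] lemma wv12_e5 : wv12 5 = 5/2 := rfl
@[simp] lemma wv12_e6 : wv12 6 = -11/2 := rfl
@[simp] lemma wv12_e7 : wv12 7 = 11/2 := rfl

def wvsum : Fin 8 → ℝ := ![0, 2, 4, 6, 8, -8, -8, 8]
@[simp] lemma wvsum_e0 : wvsum 0 = 0 := rfl
@[simp] lemma wvsum_e1 : wvsum 1 = 2 := rfl
@[simp] lemma wvsum_e2 : wvsum 2 = 4 := rfl
@[simp] lemma wvsum_e3 : wvsum 3 = 6 := rfl
@[simp] lemma wvsum_e4 : wvsum 4 = 8 := rfl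
@[simp] lemma wvsum_e5 : wvsum 5 = -8 := rfl
@[simp] lemma wvsum_e6 : wvsum 6 = -8 := rfl
@[simp] lemma wvsum_e7 : wvsum 7 = 8 := rfl

def csumv : Fin 7 → ℕ := ![16, 22, 30, 42, 30, 16, 0]
@[simp] lemma csumv_e0 : csumv 0 = 16 := rfl
@[simp] lemma csumv_e1 : csumv 1 = 22 := rfl
@[simp] lemma csumv_e2 : csumv 2 = 30 := rfl
@[simp] lemma csumv_e3 : csumv 3 = 42 := rfl
@[simp] lemma csumv_e4 : csumv 4 = 30 := rfl
@[simp] lemma csumv_e5 : csumv 5 = 16 := rfl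
@[simp] lemma csumv_e6 : csumv 6 = 0 := rfl

lemma fin7_all {P : Fin 7 → Prop} (h0 : P 0) (h1 : P 1) (h2 : P 2) (h3 : P 3)
    (h4 : P 4) (h5 : P 5) (h6 : P 6) : ∀ i, P i := by
  intro i
  obtain ⟨v, hv⟩ := i
  interval_cases v
  · exact h0
  · exact h1
  · exact h2
  · exact h3
  · exact h4
  · exact h5
  · exact h6

lemma fin8_all {P : Fin 8 → Prop} (h0 : P 0) (h1 : P 1) (h2 : P 2) (h3 : P 3)
    (h4 : P 4) (h5 : P 5) (h6 : P 6) (h7 : P 7) : ∀ i, P i := by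
  intro i
  obtain ⟨v, hv⟩ := i
  interval_cases v
  · exact h0
  · exact h1
  · exact h2
  · exact h3
  · exact h4
  · exact h5
  · exact h6
  · exact h7

lemma ip_comm (x y : Fin 8 → ℝ) : ip x y = ip y x := by
  simp [ip, mul_comm]

lemma ip_add_left (x y z : Fin 8 → ℝ) : ip (x + y) z = ip x z + ip y z := by
  simp [ip, add_mul, Finset.sum_add_distrib]

lemma ip_sub_left (x y z : Fin 8 → ℝ) : ip (x - y) z = ip x z - ip y z := by
  simp [ip, sub_mul, Finset.sum_sub_distrib]

lemma ip_smul_left (c : ℝ) (x y : Fin 8 → ℝ) : ip (c • x) y = c * ip x y := by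
  simp [ip, Finset.mul_sum, mul_assoc]

lemma ip_sum_left (f : Fin 7 → (Fin 8 → ℝ)) (y : Fin 8 → ℝ) :
    ip (∑ j, f j) y = ∑ j, ip (f j) y := by
  simp only [ip, Finset.sum_apply, Finset.sum_mul]
  exact Finset.sum_comm

lemma ip_self_eq_zero {v : Fin 8 → ℝ} (h : ip v v = 0) : v = 0 := by
  funext i
  have h1 : ∀ j ∈ (Finset.univ : Finset (Fin 8)), 0 ≤ v j * v j :=
    fun j _ => mul_self_nonneg _
  have h2 : v i * v i = 0 := (Finset.sum_eq_zero_iff_of_nonneg h1).mp h i (Finset.mem_univ i)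
  exact mul_self_eq_zero.mp h2

lemma ip_cs (x y : Fin 8 → ℝ) : (ip x y)^2 ≤ ip x x * ip y y := by
  have h := Finset.sum_mul_sq_le_sq_mul_sq Finset.univ x y
  simpa [ip, pow_two] using h

lemma zfw_pair : ∀ i j, ip (zfw i) (sroot j) = if i = j then 1 else 0 := by
  refine fin7_all ?_ ?_ ?_ ?_ ?_ ?_ ?_ <;>
    refine fin7_all ?_ ?_ ?_ ?_ ?_ ?_ ?_ <;>
      (norm_num [ip, Fin.sum_univ_eight]; try decide; try exact (if_neg (by decide)).symm)

lemma zfw_span : ∀ i, zfw i ∈ Submodule.span ℝ (Set.range sroot) := by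
  refine fin7_all ?_ ?_ ?_ ?_ ?_ ?_ ?_
  · have h : (2 : ℝ) • sroot 0 + (2 : ℝ) • sroot 1 + (3 : ℝ) • sroot 2 + (4 : ℝ) • sroot 3 + (3 : ℝ) • sroot 4 + (2 : ℝ) • sroot 5 + (1 : ℝ) • sroot 6 = zfw 0 := by
      refine funext (fin8_all ?_ ?_ ?_ ?_ ?_ ?_ ?_ ?_) <;> norm_num
    rw [← h]
    exact (add_mem (add_mem (add_mem (add_mem (add_mem (add_mem (Submodule.smul_mem _ _ (Submodule.subset_span (Set.mem_range_self (0 : Fin 7)))) (Submodule.smul_mem _ _ (Submodule.subset_span (Set.mem_range_self (1 : Fin 7))))) (Submodule.smul_mem _ _ (Submodule.subset_span (Set.mem_range_self (2 : Fin 7))))) (Submodule.smul_mem _ _ (Submodule.subset_span (Set.mem_range_self (3 : Fin 7))))) (Submodule.smul_mem _ _ (Submodule.subset_span (Set.mem_range_self (4 : Fin 7))))) (Submodule.smul_mem _ _ (Submodule.subset_span (Set.mem_range_self (5 : Fin 7))))) (Submodule.smul_mem _ _ (Submodule.subset_span (Set.mem_range_self (6 : Fin 7)))))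
  · have h : (2 : ℝ) • sroot 0 + (7/2 : ℝ) • sroot 1 + (4 : ℝ) • sroot 2 + (6 : ℝ) • sroot 3 + (9/2 : ℝ) • sroot 4 + (3 : ℝ) • sroot 5 + (3/2 : ℝ) • sroot 6 = zfw 1 := by
      refine funext (fin8_all ?_ ?_ ?_ ?_ ?_ ?_ ?_ ?_) <;> norm_num
    rw [← h]
    exact (add_mem (add_mem (add_mem (add_mem (add_mem (add_mem (Submodule.smul_mem _ _ (Submodule.subset_span (Set.mem_range_self (0 : Fin 7)))) (Submodule.smul_mem _ _ (Submodule.subset_span (Set.mem_range_self (1 : Fin 7))))) (Submodule.smul_mem _ _ (Submodule.subset_span (Set.mem_range_self (2 : Fin 7))))) (Submodule.smul_mem _ _ (Submodule.subset_span (Set.mem_range_self (3 : Fin 7))))) (Submodule.smul_mem _ _ (Submodule.subset_span (Set.mem_range_self (4 : Fin 7))))) (Submodule.smul_mem _ _ (Submodule.subset_span (Set.mem_range_self (5 : Fin 7))))) (Submodule.smul_mem _ _ (Submodule.subset_span (Set.mem_range_self (6 : Fin 7)))))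
  · have h : (3 : ℝ) • sroot 0 + (4 : ℝ) • sroot 1 + (6 : ℝ) • sroot 2 + (8 : ℝ) • sroot 3 + (6 : ℝ) • sroot 4 + (4 : ℝ) • sroot 5 + (2 : ℝ) • sroot 6 = zfw 2 := by
      refine funext (fin8_all ?_ ?_ ?_ ?_ ?_ ?_ ?_ ?_) <;> norm_num
    rw [← h]
    exact (add_mem (add_mem (add_mem (add_mem (add_mem (add_mem (Submodule.smul_mem _ _ (Submodule.subset_span (Set.mem_range_self (0 : Fin 7)))) (Submodule.smul_mem _ _ (Submodule.subset_span (Set.mem_range_self (1 : Fin 7))))) (Submodule.smul_mem _ _ (Submodule.subset_span (Set.mem_range_self (2 : Fin 7))))) (Submodule.smul_mem _ _ (Submodule.subset_span (Set.mem_range_self (3 : Fin 7))))) (Submodule.smul_mem _ _ (Submodule.subset_span (Set.mem_range_self (4 : Fin 7))))) (Submodule.smul_mem _ _ (Submodule.subset_span (Set.mem_range_self (5 : Fin 7))))) (Submodule.smul_mem _ _ (Submodule.subset_span (Set.mem_range_self (6 : Fin 7)))))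
  · have h : (4 : ℝ) • sroot 0 + (6 : ℝ) • sroot 1 + (8 : ℝ) • sroot 2 + (12 : ℝ) • sroot 3 + (9 : ℝ) • sroot 4 + (6 : ℝ) • sroot 5 + (3 : ℝ) • sroot 6 = zfw 3 := by
      refine funext (fin8_all ?_ ?_ ?_ ?_ ?_ ?_ ?_ ?_) <;> norm_num
    rw [← h]
    exact (add_mem (add_mem (add_mem (add_mem (add_mem (add_mem (Submodule.smul_mem _ _ (Submodule.subset_span (Set.mem_range_self (0 : Fin 7)))) (Submodule.smul_mem _ _ (Submodule.subset_span (Set.mem_range_self (1 : Fin 7))))) (Submodule.smul_mem _ _ (Submodule.subset_span (Set.mem_range_self (2 : Fin 7))))) (Submodule.smul_mem _ _ (Submodule.subset_span (Set.mem_range_self (3 : Fin 7))))) (Submodule.smul_mem _ _ (Submodule.subset_span (Set.mem_range_self (4 : Fin 7))))) (Submodule.smul_mem _ _ (Submodule.subset_span (Set.mem_range_self (5 : Fin 7))))) (Submodule.smul_mem _ _ (Submodule.subset_span (Set.mem_range_self (6 : Fin 7)))))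
  · have h : (3 : ℝ) • sroot 0 + (9/2 : ℝ) • sroot 1 + (6 : ℝ) • sroot 2 + (9 : ℝ) • sroot 3 + (15/2 : ℝ) • sroot 4 + (5 : ℝ) • sroot 5 + (5/2 : ℝ) • sroot 6 = zfw 4 := by
      refine funext (fin8_all ?_ ?_ ?_ ?_ ?_ ?_ ?_ ?_) <;> norm_num
    rw [← h]
    exact (add_mem (add_mem (add_mem (add_mem (add_mem (add_mem (Submodule.smul_mem _ _ (Submodule.subset_span (Set.mem_range_self (0 : Fin 7)))) (Submodule.smul_mem _ _ (Submodule.subset_span (Set.mem_range_self (1 : Fin 7))))) (Submodule.smul_mem _ _ (Submodule.subset_span (Set.mem_range_self (2 : Fin 7))))) (Submodule.smul_mem _ _ (Submodule.subset_span (Set.mem_range_self (3 : Fin 7))))) (Submodule.smul_mem _ _ (Submodule.subset_span (Set.mem_range_self (4 : Fin 7))))) (Submodule.smul_mem _ _ (Submodule.subset_span (Set.mem_range_self (5 : Fin 7))))) (Submodule.smul_mem _ _ (Submodule.subset_span (Set.mem_range_self (6 : Fin 7)))))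
  · have h : (2 : ℝ) • sroot 0 + (3 : ℝ) • sroot 1 + (4 : ℝ) • sroot 2 + (6 : ℝ) • sroot 3 + (5 : ℝ) • sroot 4 + (4 : ℝ) • sroot 5 + (2 : ℝ) • sroot 6 = zfw 5 := by
      refine funext (fin8_all ?_ ?_ ?_ ?_ ?_ ?_ ?_ ?_) <;> norm_num
    rw [← h]
    exact (add_mem (add_mem (add_mem (add_mem (add_mem (add_mem (Submodule.smul_mem _ _ (Submodule.subset_span (Set.mem_range_self (0 : Fin 7)))) (Submodule.smul_mem _ _ (Submodule.subset_span (Set.mem_range_self (1 : Fin 7))))) (Submodule.smul_mem _ _ (Submodule.subset_span (Set.mem_range_self (2 : Fin 7))))) (Submodule.smul_mem _ _ (Submodule.subset_span (Set.mem_range_self (3 : Fin 7))))) (Submodule.smul_mem _ _ (Submodule.subset_span (Set.mem_range_self (4 : Fin 7))))) (Submodule.smul_mem _ _ (Submodule.subset_span (Set.mem_range_self (5 : Fin 7))))) (Submodule.smul_mem _ _ (Submodule.subset_span (Set.mem_range_self (6 : Fin 7)))))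
  · have h : (1 : ℝ) • sroot 0 + (3/2 : ℝ) • sroot 1 + (2 : ℝ) • sroot 2 + (3 : ℝ) • sroot 3 + (5/2 : ℝ) • sroot 4 + (2 : ℝ) • sroot 5 + (3/2 : ℝ) • sroot 6 = zfw 6 := by
      refine funext (fin8_all ?_ ?_ ?_ ?_ ?_ ?_ ?_ ?_) <;> norm_num
    rw [← h]
    exact (add_mem (add_mem (add_mem (add_mem (add_mem (add_mem (Submodule.smul_mem _ _ (Submodule.subset_span (Set.mem_range_self (0 : Fin 7)))) (Submodule.smul_mem _ _ (Submodule.subset_span (Set.mem_range_self (1 : Fin 7))))) (Submodule.smul_mem _ _ (Submodule.subset_span (Set.mem_range_self (2 : Fin 7))))) (Submodule.smul_mem _ _ (Submodule.subset_span (Set.mem_range_self (3 : Fin 7))))) (Submodule.smul_mem _ _ (Submodule.subset_span (Set.mem_range_self (4 : Fin 7))))) (Submodule.smul_mem _ _ (Submodule.subset_span (Set.mem_range_self (5 : Fin 7))))) (Submodule.smul_mem _ _ (Submodule.subset_span (Set.mem_range_self (6 : Fin 7)))))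

lemma fw_unique (x : Fin 8 → ℝ) (i : Fin 7)
    (hsp : x ∈ Submodule.span ℝ (Set.range sroot))
    (hp : ∀ j, ip x (sroot j) = if i = j then 1 else 0) : x = zfw i := by
  have hd : x - zfw i ∈ Submodule.span ℝ (Set.range sroot) := sub_mem hsp (zfw_span i)
  obtain ⟨c, hc⟩ := (Submodule.mem_span_range_iff_exists_fun ℝ).mp hd
  have hz : ∀ j, ip (x - zfw i) (sroot j) = 0 := by
    intro j
    rw [ip_sub_left, hp j, zfw_pair i j]
    exact sub_self _
  have h0 : ip (x - zfw i) (x - zfw i) = 0 := by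
    calc ip (x - zfw i) (x - zfw i) = ip (∑ j, c j • sroot j) (x - zfw i) := by rw [hc]
    _ = ∑ j, ip (c j • sroot j) (x - zfw i) := ip_sum_left _ _
    _ = 0 := Finset.sum_eq_zero (fun j _ => by
          rw [ip_smul_left, ip_comm, hz j, mul_zero])
  have h2 : x - zfw i = 0 := ip_self_eq_zero h0
  funext k
  have h3 := congrFun h2 k
  simpa [sub_eq_zero] using h3

def toR (c : Fin 7 → ℕ) : Fin 8 → ℝ := ∑ j, (c j : ℝ) • sroot j

lemma toR_apply (c : Fin 7 → ℕ) (i : Fin 8) :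
    toR c i = (c 0 : ℝ) * sroot 0 i + (c 1 : ℝ) * sroot 1 i + (c 2 : ℝ) * sroot 2 i
      + (c 3 : ℝ) * sroot 3 i + (c 4 : ℝ) * sroot 4 i + (c 5 : ℝ) * sroot 5 i
      + (c 6 : ℝ) * sroot 6 i := by
  simp [toR, Fin.sum_univ_seven]

lemma ip_toR_zeta (c : Fin 7 → ℕ) : ip (toR c) zeta = (c 6 : ℝ) := by
  norm_num [ip, Fin.sum_univ_eight, toR_apply]
  try ring

lemma ip_toR_toR (c : Fin 7 → ℕ) : ip (toR c) (toR c) =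
    2*(c 0:ℝ)*(c 0:ℝ) + 2*(c 1:ℝ)*(c 1:ℝ) + 2*(c 2:ℝ)*(c 2:ℝ) + 2*(c 3:ℝ)*(c 3:ℝ)
    + 2*(c 4:ℝ)*(c 4:ℝ) + 2*(c 5:ℝ)*(c 5:ℝ) + 2*(c 6:ℝ)*(c 6:ℝ)
    - 2*(c 0:ℝ)*(c 2:ℝ) - 2*(c 1:ℝ)*(c 3:ℝ) - 2*(c 2:ℝ)*(c 3:ℝ)
    - 2*(c 3:ℝ)*(c 4:ℝ) - 2*(c 4:ℝ)*(c 5:ℝ) - 2*(c 5:ℝ)*(c 6:ℝ) := by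
  norm_num [ip, Fin.sum_univ_eight, toR_apply]
  ring

lemma toR_coeff (c : Fin 7 → ℕ) : ∀ j, ip (toR c) (zfw j) = (c j : ℝ) := by
  refine fin7_all ?_ ?_ ?_ ?_ ?_ ?_ ?_ <;>
    · norm_num [ip, Fin.sum_univ_eight, toR_apply]
      try ring

lemma toR_inj : Function.Injective toR := by
  intro a b h
  funext j
  have ha := toR_coeff a j
  have hb := toR_coeff b j
  rw [h] at ha
  have hab : (a j : ℝ) = (b j : ℝ) := by rw [← ha, ← hb]
  exact_mod_cast hab

lemma toR_add (a b : Fin 7 → ℕ) : toR (a + b) = toR a + toR b := by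
  simp only [toR, Pi.add_apply, Nat.cast_add, add_smul, Finset.sum_add_distrib]

lemma toR_zero : toR 0 = 0 := by
  simp [toR]

lemma sum_map_toR (l : List (Fin 7 → ℕ)) : (l.map toR).sum = toR l.sum := by
  induction l with
  | nil => simp [toR_zero]
  | cons a t ih => simp [ih, toR_add]

def clist : List (Fin 7 → ℕ) :=
  [![0, 0, 0, 0, 0, 1, 0],
   ![0, 0, 0, 0, 1, 0, 0],
   ![0, 0, 0, 0, 1, 1, 0],
   ![0, 0, 0, 1, 0, 0, 0],
   ![0, 0, 0, 1, 1, 0, 0],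
   ![0, 0, 0, 1, 1, 1, 0],
   ![0, 0, 1, 0, 0, 0, 0],
   ![0, 0, 1, 1, 0, 0, 0],
   ![0, 0, 1, 1, 1, 0, 0],
   ![0, 0, 1, 1, 1, 1, 0],
   ![0, 1, 0, 0, 0, 0, 0],
   ![0, 1, 0, 1, 0, 0, 0],
   ![0, 1, 0, 1, 1, 0, 0],
   ![0, 1, 0, 1, 1, 1, 0],
   ![0, 1, 1, 1, 0, 0, 0],
   ![0, 1, 1, 1, 1, 0, 0],
   ![0, 1, 1, 1, 1, 1, 0],
   ![0, 1, 1, 2, 1, 0, 0],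
   ![0, 1, 1, 2, 1, 1, 0],
   ![0, 1, 1, 2, 2, 1, 0],
   ![1, 0, 0, 0, 0, 0, 0],
   ![1, 0, 1, 0, 0, 0, 0],
   ![1, 0, 1, 1, 0, 0, 0],
   ![1, 0, 1, 1, 1, 0, 0],
   ![1, 0, 1, 1, 1, 1, 0],
   ![1, 1, 1, 1, 0, 0, 0],
   ![1, 1, 1, 1, 1, 0, 0],
   ![1, 1, 1, 1, 1, 1, 0],
   ![1, 1, 1, 2, 1, 0, 0],
   ![1, 1, 1, 2, 1, 1, 0],
   ![1, 1, 1, 2, 2, 1, 0],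
   ![1, 1, 2, 2, 1, 0, 0],
   ![1, 1, 2, 2, 1, 1, 0],
   ![1, 1, 2, 2, 2, 1, 0],
   ![1, 1, 2, 3, 2, 1, 0],
   ![1, 2, 2, 3, 2, 1, 0]]

lemma clist_nodup : clist.Nodup := by decide

lemma clist_sum : clist.sum = csumv := by decide

lemma key (a b : Fin 3) (c : Fin 4) (d : Fin 5) (e : Fin 4) (f : Fin 3)
    (h : 2*((a:ℕ)*(a:ℕ) + (b:ℕ)*(b:ℕ) + (c:ℕ)*(c:ℕ) + (d:ℕ)*(d:ℕ) + (e:ℕ)*(e:ℕ) + (f:ℕ)*(f:ℕ))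
        = 2 + 2*((a:ℕ)*(c:ℕ)) + 2*((b:ℕ)*(d:ℕ)) + 2*((c:ℕ)*(d:ℕ)) + 2*((d:ℕ)*(e:ℕ)) + 2*((e:ℕ)*(f:ℕ))) :
    (![(a:ℕ), (b:ℕ), (c:ℕ), (d:ℕ), (e:ℕ), (f:ℕ), 0] : Fin 7 → ℕ) ∈ clist := by
  revert a b c d e f
  decide

lemma zfw_norm0 : ip (zfw 0) (zfw 0) = 2 := by
  norm_num [ip, Fin.sum_univ_eight]
lemma zfw_norm1 : ip (zfw 1) (zfw 1) = 7/2 := by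
  norm_num [ip, Fin.sum_univ_eight]
lemma zfw_norm2 : ip (zfw 2) (zfw 2) = 6 := by
  norm_num [ip, Fin.sum_univ_eight]
lemma zfw_norm3 : ip (zfw 3) (zfw 3) = 12 := by
  norm_num [ip, Fin.sum_univ_eight]
lemma zfw_norm4 : ip (zfw 4) (zfw 4) = 15/2 := by
  norm_num [ip, Fin.sum_univ_eight]
lemma zfw_norm5 : ip (zfw 5) (zfw 5) = 4 := by
  norm_num [ip, Fin.sum_univ_eight]

lemma forward (y : Fin 8 → ℝ) (hy : y ∈ PhiPosK) : ∃ c ∈ clist, toR c = y := by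
  obtain ⟨⟨⟨hlat, hip2⟩, c, hc⟩, hz⟩ := hy
  have hy2 : y = toR c := hc
  subst hy2
  have hz6 : c 6 = 0 := by
    have h5 := ip_toR_zeta c
    rw [hz] at h5
    exact_mod_cast h5.symm
  have hb0 : c 0 ≤ 2 := by
    have h1 := ip_cs (toR c) (zfw 0)
    rw [toR_coeff c 0, hip2, zfw_norm0] at h1
    by_contra hcon
    push_neg at hcon
    have h3 : (3 : ℝ) ≤ (c 0 : ℝ) := by exact_mod_cast hcon
    nlinarith
  have hb1 : c 1 ≤ 2 := by
    have h1 := ip_cs (toR c) (zfw 1)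
    rw [toR_coeff c 1, hip2, zfw_norm1] at h1
    by_contra hcon
    push_neg at hcon
    have h3 : (3 : ℝ) ≤ (c 1 : ℝ) := by exact_mod_cast hcon
    nlinarith
  have hb2 : c 2 ≤ 3 := by
    have h1 := ip_cs (toR c) (zfw 2)
    rw [toR_coeff c 2, hip2, zfw_norm2] at h1
    by_contra hcon
    push_neg at hcon
    have h3 : (4 : ℝ) ≤ (c 2 : ℝ) := by exact_mod_cast hcon
    nlinarith
  have hb3 : c 3 ≤ 4 := by
    have h1 := ip_cs (toR c) (zfw 3)
    rw [toR_coeff c 3, hip2, zfw_norm3] at h1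
    by_contra hcon
    push_neg at hcon
    have h3 : (5 : ℝ) ≤ (c 3 : ℝ) := by exact_mod_cast hcon
    nlinarith
  have hb4 : c 4 ≤ 3 := by
    have h1 := ip_cs (toR c) (zfw 4)
    rw [toR_coeff c 4, hip2, zfw_norm4] at h1
    by_contra hcon
    push_neg at hcon
    have h3 : (4 : ℝ) ≤ (c 4 : ℝ) := by exact_mod_cast hcon
    nlinarith
  have hb5 : c 5 ≤ 2 := by
    have h1 := ip_cs (toR c) (zfw 5)
    rw [toR_coeff c 5, hip2, zfw_norm5] at h1
    by_contra hcon
    push_neg at hcon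
    have h3 : (3 : ℝ) ≤ (c 5 : ℝ) := by exact_mod_cast hcon
    nlinarith
  rw [ip_toR_toR] at hip2
  have h6R : (c 6 : ℝ) = 0 := by exact_mod_cast hz6
  have hRe : 2*((c 0:ℝ)*(c 0:ℝ) + (c 1:ℝ)*(c 1:ℝ) + (c 2:ℝ)*(c 2:ℝ) + (c 3:ℝ)*(c 3:ℝ) + (c 4:ℝ)*(c 4:ℝ) + (c 5:ℝ)*(c 5:ℝ))
      = 2 + 2*((c 0:ℝ)*(c 2:ℝ)) + 2*((c 1:ℝ)*(c 3:ℝ)) + 2*((c 2:ℝ)*(c 3:ℝ)) + 2*((c 3:ℝ)*(c 4:ℝ)) + 2*((c 4:ℝ)*(c 5:ℝ)) := by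
    linear_combination hip2 + (2*(c 5:ℝ) - 2*(c 6:ℝ))*h6R
  have hN : 2*(c 0 * c 0 + c 1 * c 1 + c 2 * c 2 + c 3 * c 3 + c 4 * c 4 + c 5 * c 5)
      = 2 + 2*(c 0 * c 2) + 2*(c 1 * c 3) + 2*(c 2 * c 3) + 2*(c 3 * c 4) + 2*(c 4 * c 5) := by
    exact_mod_cast hRe
  have hkey := key ⟨c 0, by omega⟩ ⟨c 1, by omega⟩ ⟨c 2, by omega⟩ ⟨c 3, by omega⟩ ⟨c 4, by omega⟩ ⟨c 5, by omega⟩ hN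
  have hcv : c = ![c 0, c 1, c 2, c 3, c 4, c 5, 0] :=
    funext (fin7_all rfl rfl rfl rfl rfl rfl hz6)
  refine ⟨c, ?_, rfl⟩
  rw [hcv]
  exact hkey

lemma toR_mem_latQ (c : Fin 7 → ℕ) : toR c ∈ latQ := by
  refine ⟨fun j => (c j : ℤ), ?_⟩
  simp [toR]

lemma reverse_aux (c : Fin 7 → ℕ) (h2 : ip (toR c) (toR c) = 2) (h6 : c 6 = 0) :
    toR c ∈ PhiPosK := by
  refine ⟨⟨⟨toR_mem_latQ c, h2⟩, c, rfl⟩, ?_⟩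
  rw [ip_toR_zeta, h6]
  norm_num

lemma reverse : ∀ c ∈ clist, toR c ∈ PhiPosK := by
  intro c hc
  simp only [clist, List.mem_cons, List.not_mem_nil, or_false] at hc
  rcases hc with rfl|rfl|rfl|rfl|rfl|rfl|rfl|rfl|rfl|rfl|rfl|rfl|rfl|rfl|rfl|rfl|rfl|rfl|rfl|rfl|rfl|rfl|rfl|rfl|rfl|rfl|rfl|rfl|rfl|rfl|rfl|rfl|rfl|rfl|rfl|rfl <;>
    exact reverse_aux _ (by rw [ip_toR_toR]; norm_num [gv7_0, gv7_1, gv7_2, gv7_3, gv7_4, gv7_5, gv7_6]) (by norm_num [gv7_0, gv7_1, gv7_2, gv7_3, gv7_4, gv7_5, gv7_6])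

lemma phiPosK_eq : PhiPosK = ↑((clist.map toR).toFinset) := by
  ext y
  constructor
  · intro h
    obtain ⟨c, hc, he⟩ := forward y h
    exact Finset.mem_coe.mpr (List.mem_toFinset.mpr (List.mem_map.mpr ⟨c, hc, he⟩))
  · intro h
    obtain ⟨c, hc, he⟩ := List.mem_map.mp (List.mem_toFinset.mp (Finset.mem_coe.mp h))
    exact he ▸ reverse c hc

lemma toR_csum : toR csumv = wvsum := by
  refine funext (fin8_all ?_ ?_ ?_ ?_ ?_ ?_ ?_ ?_) <;> norm_num [toR_apply]

def sref (a : Fin 8 → ℝ) (h : ip a a = 2) :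
    (Fin 8 → ℝ) ≃ₗ[ℝ] (Fin 8 → ℝ) where
  toFun v := v - ip v a • a
  invFun v := v - ip v a • a
  map_add' x y := by
    funext i
    simp only [Pi.add_apply, Pi.sub_apply, Pi.smul_apply, smul_eq_mul, ip_add_left]
    ring
  map_smul' r x := by
    funext i
    simp only [Pi.smul_apply, Pi.sub_apply, smul_eq_mul, ip_smul_left, RingHom.id_apply]
    ring
  left_inv v := by
    have hh : ip (v - ip v a • a) a = - ip v a := by
      rw [ip_sub_left, ip_smul_left, h]; ring
    show (v - ip v a • a) - ip (v - ip v a • a) a • a = v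
    rw [hh]
    funext i
    simp only [Pi.sub_apply, Pi.smul_apply, smul_eq_mul, neg_mul]
    ring
  right_inv v := by
    have hh : ip (v - ip v a • a) a = - ip v a := by
      rw [ip_sub_left, ip_smul_left, h]; ring
    show (v - ip v a • a) - ip (v - ip v a • a) a • a = v
    rw [hh]
    funext i
    simp only [Pi.sub_apply, Pi.smul_apply, smul_eq_mul, neg_mul]
    ring

lemma sref_apply (a : Fin 8 → ℝ) (h : ip a a = 2) (v : Fin 8 → ℝ) :
    sref a h v = v - ip v a • a := rfl

lemma iss : ∀ j, ip (sroot j) (sroot j) = 2 := by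
  refine fin7_all ?_ ?_ ?_ ?_ ?_ ?_ ?_ <;> norm_num [ip, Fin.sum_univ_eight]

lemma sroot_mem_Phi (j : Fin 7) : sroot j ∈ Phi := by
  refine ⟨⟨fun k => if k = j then 1 else 0, ?_⟩, iss j⟩
  have h1 : ∀ k : Fin 7, (((if k = j then (1:ℤ) else 0) : ℤ) : ℝ) • sroot k
      = if k = j then sroot k else 0 := by
    intro k
    by_cases hk : k = j <;> simp [hk]
  rw [Finset.sum_congr rfl (fun k _ => h1 k), Finset.sum_ite_eq' Finset.univ j sroot]
  simp

lemma sref_mem_W (j : Fin 7) : sref (sroot j) (iss j) ∈ W :=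
  Subgroup.subset_closure ⟨sroot j, sroot_mem_Phi j, fun v => rfl⟩

def gW : (Fin 8 → ℝ) ≃ₗ[ℝ] (Fin 8 → ℝ) :=
  sref (sroot 5) (iss 5) * (sref (sroot 3) (iss 3) * (sref (sroot 4) (iss 4) * (sref (sroot 2) (iss 2) * (sref (sroot 3) (iss 3) * (sref (sroot 0) (iss 0) * (sref (sroot 2) (iss 2) * (sref (sroot 1) (iss 1) * (sref (sroot 3) (iss 3) * (sref (sroot 4) (iss 4) * (sref (sroot 5) (iss 5) * (sref (sroot 6) (iss 6))))))))))))

lemma gW_mem : gW ∈ W :=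
  mul_mem (sref_mem_W 5) (mul_mem (sref_mem_W 3) (mul_mem (sref_mem_W 4) (mul_mem (sref_mem_W 2) (mul_mem (sref_mem_W 3) (mul_mem (sref_mem_W 0) (mul_mem (sref_mem_W 2) (mul_mem (sref_mem_W 1) (mul_mem (sref_mem_W 3) (mul_mem (sref_mem_W 4) (mul_mem (sref_mem_W 5) (sref_mem_W 6)))))))))))

lemma gW_rho : gW wv0 = wv12 := by
  have e0 : gW wv0 = sref (sroot 5) (iss 5) (sref (sroot 3) (iss 3) (sref (sroot 4) (iss 4) (sref (sroot 2) (iss 2) (sref (sroot 3) (iss 3) (sref (sroot 0) (iss 0) (sref (sroot 2) (iss 2) (sref (sroot 1) (iss 1) (sref (sroot 3) (iss 3) (sref (sroot 4) (iss 4) (sref (sroot 5) (iss 5) (sref (sroot 6) (iss 6) (wv0)))))))))))) := rfl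
  have s0 : sref (sroot 6) (iss 6) wv0 = wv1 := by
    rw [sref_apply]
    have hip : ip wv0 (sroot 6) = -8 := by
      norm_num [ip, Fin.sum_univ_eight]
    rw [hip]
    refine funext (fin8_all ?_ ?_ ?_ ?_ ?_ ?_ ?_ ?_) <;> norm_num
  have s1 : sref (sroot 5) (iss 5) wv1 = wv2 := by
    rw [sref_apply]
    have hip : ip wv1 (sroot 5) = -7 := by
      norm_num [ip, Fin.sum_univ_eight]
    rw [hip]
    refine funext (fin8_all ?_ ?_ ?_ ?_ ?_ ?_ ?_ ?_) <;> norm_num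
  have s2 : sref (sroot 4) (iss 4) wv2 = wv3 := by
    rw [sref_apply]
    have hip : ip wv2 (sroot 4) = -6 := by
      norm_num [ip, Fin.sum_univ_eight]
    rw [hip]
    refine funext (fin8_all ?_ ?_ ?_ ?_ ?_ ?_ ?_ ?_) <;> norm_num
  have s3 : sref (sroot 3) (iss 3) wv3 = wv4 := by
    rw [sref_apply]
    have hip : ip wv3 (sroot 3) = -5 := by
      norm_num [ip, Fin.sum_univ_eight]
    rw [hip]
    refine funext (fin8_all ?_ ?_ ?_ ?_ ?_ ?_ ?_ ?_) <;> norm_num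
  have s4 : sref (sroot 1) (iss 1) wv4 = wv5 := by
    rw [sref_apply]
    have hip : ip wv4 (sroot 1) = -4 := by
      norm_num [ip, Fin.sum_univ_eight]
    rw [hip]
    refine funext (fin8_all ?_ ?_ ?_ ?_ ?_ ?_ ?_ ?_) <;> norm_num
  have s5 : sref (sroot 2) (iss 2) wv5 = wv6 := by
    rw [sref_apply]
    have hip : ip wv5 (sroot 2) = -4 := by
      norm_num [ip, Fin.sum_univ_eight]
    rw [hip]
    refine funext (fin8_all ?_ ?_ ?_ ?_ ?_ ?_ ?_ ?_) <;> norm_num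
  have s6 : sref (sroot 0) (iss 0) wv6 = wv7 := by
    rw [sref_apply]
    have hip : ip wv6 (sroot 0) = -3 := by
      norm_num [ip, Fin.sum_univ_eight]
    rw [hip]
    refine funext (fin8_all ?_ ?_ ?_ ?_ ?_ ?_ ?_ ?_) <;> norm_num
  have s7 : sref (sroot 3) (iss 3) wv7 = wv8 := by
    rw [sref_apply]
    have hip : ip wv7 (sroot 3) = -3 := by
      norm_num [ip, Fin.sum_univ_eight]
    rw [hip]
    refine funext (fin8_all ?_ ?_ ?_ ?_ ?_ ?_ ?_ ?_) <;> norm_num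
  have s8 : sref (sroot 2) (iss 2) wv8 = wv9 := by
    rw [sref_apply]
    have hip : ip wv8 (sroot 2) = -2 := by
      norm_num [ip, Fin.sum_univ_eight]
    rw [hip]
    refine funext (fin8_all ?_ ?_ ?_ ?_ ?_ ?_ ?_ ?_) <;> norm_num
  have s9 : sref (sroot 4) (iss 4) wv9 = wv10 := by
    rw [sref_apply]
    have hip : ip wv9 (sroot 4) = -2 := by
      norm_num [ip, Fin.sum_univ_eight]
    rw [hip]
    refine funext (fin8_all ?_ ?_ ?_ ?_ ?_ ?_ ?_ ?_) <;> norm_num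
  have s10 : sref (sroot 3) (iss 3) wv10 = wv11 := by
    rw [sref_apply]
    have hip : ip wv10 (sroot 3) = -1 := by
      norm_num [ip, Fin.sum_univ_eight]
    rw [hip]
    refine funext (fin8_all ?_ ?_ ?_ ?_ ?_ ?_ ?_ ?_) <;> norm_num
  have s11 : sref (sroot 5) (iss 5) wv11 = wv12 := by
    rw [sref_apply]
    have hip : ip wv11 (sroot 5) = -1 := by
      norm_num [ip, Fin.sum_univ_eight]
    rw [hip]
    refine funext (fin8_all ?_ ?_ ?_ ?_ ?_ ?_ ?_ ?_) <;> norm_num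
  rw [e0, s0, s1, s2, s3, s4, s5, s6, s7, s8, s9, s10, s11]

end Aux

/-- ζ₁ + ζ₃ + ζ₄ + ζ₆ lies in the Weyl group orbit of ρ_c; i.e. the
infinitesimal character [1,0,1,1,0,1,0] is W-conjugate to ρ_c. -/
theorem e7_inf_char_conjugate_to_rho_c
    (fw : Fin 7 → Fin 8 → ℝ)
    (hfw_span : ∀ i, fw i ∈ Submodule.span ℝ (Set.range sroot))
    (hfw_pair : ∀ i j, ip (fw i) (sroot j) = if i = j then 1 else 0)
    (sK : Finset (Fin 8 → ℝ)) (hsK : (sK : Set (Fin 8 → ℝ)) = PhiPosK) :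
    ∃ g ∈ W, fw 0 + fw 2 + fw 3 + fw 5 = g ((1/2 : ℝ) • ∑ y ∈ sK, y) := by
  have hK : sK = (clist.map toR).toFinset :=
    Finset.coe_injective (hsK.trans phiPosK_eq)
  have hnodup : (clist.map toR).Nodup := clist_nodup.map toR_inj
  have hsum : ∑ y ∈ sK, y = toR clist.sum := by
    rw [hK, List.sum_toFinset _ hnodup, List.map_id']
    exact sum_map_toR clist
  have hhalf : (1/2 : ℝ) • ∑ y ∈ sK, y = wv0 := by
    rw [hsum, clist_sum, toR_csum]
    refine funext (fin8_all ?_ ?_ ?_ ?_ ?_ ?_ ?_ ?_) <;> norm_num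
  have hfw0 : fw 0 = zfw 0 := fw_unique (fw 0) 0 (hfw_span 0) (fun j => hfw_pair 0 j)
  have hfw2 : fw 2 = zfw 2 := fw_unique (fw 2) 2 (hfw_span 2) (fun j => hfw_pair 2 j)
  have hfw3 : fw 3 = zfw 3 := fw_unique (fw 3) 3 (hfw_span 3) (fun j => hfw_pair 3 j)
  have hfw5 : fw 5 = zfw 5 := fw_unique (fw 5) 5 (hfw_span 5) (fun j => hfw_pair 5 j)
  have hlam : fw 0 + fw 2 + fw 3 + fw 5 = wv12 := by
    rw [hfw0, hfw2, hfw3, hfw5]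
    refine funext (fin8_all ?_ ?_ ?_ ?_ ?_ ?_ ?_ ?_) <;> norm_num
  refine ⟨gW, gW_mem, ?_⟩
  rw [hhalf, gW_rho, hlam]

end E7
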